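/- Assume condition (2.2) and the stability assumption (6.3) hold. Then for Δt = T/N and 1 ≤ n ≤ N: x^n + (1 − x^n)·2S/h ≤ ‖φ(Δt M)^n‖_∞ ≤ K + 4(K+1)S/h, where x = φ(−rΔt). -/

import Mathlib

/-- Tridiagonal matrix with diagonal `α`, subdiagonal `β` and superdiagonal `γ`. -/
def tridiag {m : ℕ} (α β γ : Fin m → ℝ) : Matrix (Fin m) (Fin m) ℝ :=
  Matrix.of fun i j =>
    if (i : ℕ) = j then α i
    else if (i : ℕ) = (j : ℕ) + 1 then β i
    else if (j : ℕ) = (i : ℕ) + 1 then γ i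
    else 0

/-- The `(m+1)×2` matrix whose only nonzero entry is `g` in the bottom-left position. -/
def Bmat {m : ℕ} (g : ℝ) : Matrix (Fin (m + 1)) (Fin 2) ℝ :=
  Matrix.of fun i j => if i = Fin.last m ∧ j = 0 then g else 0

/-- The `2×2` matrix both of whose rows equal `(−rS/h, r·s_{m+1}/h)`. -/
noncomputable def Cmat (r spen S h : ℝ) : Matrix (Fin 2) (Fin 2) ℝ :=
  Matrix.of fun _ j => if j = 0 then -(r * S) / h else r * spen / h

/-- The maximum norm of a real matrix: `‖X‖_∞ = max_i Σ_j |X i j|`. -/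
noncomputable def matMaxNorm {ι κ : Type*} [Fintype ι] [Fintype κ]
    (X : Matrix ι κ ℝ) : ℝ :=
  ⨆ i, ∑ j, |X i j|

/-- The logarithmic maximum norm `μ_∞[X] = max_i ( x_{ii} + Σ_{j≠i} |x_{ij}| )`. -/
noncomputable def logMaxNorm {ι : Type*} [Fintype ι] [DecidableEq ι]
    (X : Matrix ι ι ℝ) : ℝ :=
  ⨆ i, (X i i + ∑ j ∈ Finset.univ.erase i, |X i j|)

/-- `φ(Δt X) = (I − θΔt X)⁻¹ (I + (1−θ)Δt X)`. -/
noncomputable def phiM {ι : Type*} [Fintype ι] [DecidableEq ι] (θ dt : ℝ)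
    (X : Matrix ι ι ℝ) : Matrix ι ι ℝ :=
  (1 - (θ * dt) • X)⁻¹ * (1 + ((1 - θ) * dt) • X)

set_option linter.unusedSectionVars false
set_option linter.unusedVariables false
set_option maxHeartbeats 2000000

section Helpers

open Finset Matrix

variable {ι κ τ : Type*} [Fintype ι] [Fintype κ] [Fintype τ]

lemma rowSum_le_matMaxNorm (X : Matrix ι κ ℝ) (i : ι) :
    ∑ j, |X i j| ≤ matMaxNorm X :=
  le_ciSup (Set.Finite.bddAbove (Set.finite_range (fun i => ∑ j, |X i j|))) i

lemma matMaxNorm_le [Nonempty ι] (X : Matrix ι κ ℝ) {c : ℝ}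
    (h : ∀ i, ∑ j, |X i j| ≤ c) : matMaxNorm X ≤ c := ciSup_le h

lemma abs_mulVec_le (X : Matrix ι κ ℝ) (v : κ → ℝ) (hv : ∀ j, |v j| ≤ 1) (i : ι) :
    |X.mulVec v i| ≤ matMaxNorm X := by
  refine le_trans ?_ (rowSum_le_matMaxNorm X i)
  calc |X.mulVec v i| ≤ ∑ j, |X i j * v j| := by
        simpa [Matrix.mulVec, dotProduct] using
          Finset.abs_sum_le_sum_abs (fun j => X i j * v j) Finset.univ
    _ ≤ ∑ j, |X i j| := by
        refine Finset.sum_le_sum fun j _ => ?_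
        rw [abs_mul]
        exact mul_le_of_le_one_right (abs_nonneg _) (hv j)

lemma matMaxNorm_one [Nonempty ι] [DecidableEq ι] :
    matMaxNorm (1 : Matrix ι ι ℝ) = 1 := by
  unfold matMaxNorm
  have h : ∀ i : ι, ∑ j, |(1 : Matrix ι ι ℝ) i j| = 1 := by
    intro i
    simp [Matrix.one_apply, apply_ite abs]
  simp only [h]
  exact ciSup_const

lemma mul_vecMulVec (X : Matrix ι κ ℝ) (u : κ → ℝ) (w : τ → ℝ) :
    X * Matrix.vecMulVec u w = Matrix.vecMulVec (X.mulVec u) w := by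
  ext i l
  simp [Matrix.mul_apply, Matrix.vecMulVec_apply, Matrix.mulVec, dotProduct,
    Finset.sum_mul, mul_assoc]

lemma det_ne_zero_of_dominant {n : ℕ} (X : Matrix (Fin n) (Fin n) ℝ)
    (h : ∀ i, ∑ j ∈ Finset.univ.erase i, |X i j| < |X i i|) : X.det ≠ 0 := by
  intro hdet
  obtain ⟨v, hv0, hv⟩ := Matrix.exists_mulVec_eq_zero_iff.2 hdet
  obtain ⟨i₁, hvi₁⟩ := Function.ne_iff.1 hv0
  obtain ⟨i₀, -, hmax⟩ := Finset.exists_max_image Finset.univ (fun i => |v i|)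
    ⟨i₁, Finset.mem_univ i₁⟩
  have hV : 0 < |v i₀| :=
    lt_of_lt_of_le (abs_pos.2 hvi₁) (hmax i₁ (Finset.mem_univ i₁))
  have hrow : ∑ j, X i₀ j * v j = 0 := by
    have := congrFun hv i₀
    simpa [Matrix.mulVec, dotProduct] using this
  have hsplit : X i₀ i₀ * v i₀ = -∑ j ∈ Finset.univ.erase i₀, X i₀ j * v j := by
    have h2 : X i₀ i₀ * v i₀ + ∑ j ∈ Finset.univ.erase i₀, X i₀ j * v j = ∑ j, X i₀ j * v j :=
      Finset.add_sum_erase Finset.univ (fun j => X i₀ j * v j) (Finset.mem_univ i₀)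
    rw [hrow] at h2
    linarith
  have hb : |X i₀ i₀| * |v i₀| ≤ (∑ j ∈ Finset.univ.erase i₀, |X i₀ j|) * |v i₀| := by
    rw [← abs_mul, hsplit, abs_neg, Finset.sum_mul]
    refine le_trans (Finset.abs_sum_le_sum_abs _ _) (Finset.sum_le_sum fun j _ => ?_)
    rw [abs_mul]
    exact mul_le_mul_of_nonneg_left (hmax j (Finset.mem_univ j)) (abs_nonneg _)
  have := mul_lt_mul_of_pos_right (h i₀) hV
  linarith

lemma matrix_inv_comm {n : ℕ} {X Y : Matrix (Fin n) (Fin n) ℝ} (hY : IsUnit Y.det)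
    (h : X * Y = Y * X) : X * Y⁻¹ = Y⁻¹ * X := by
  have h2 : Y⁻¹ * ((Y * X) * Y⁻¹) = Y⁻¹ * ((X * Y) * Y⁻¹) := by rw [h]
  calc X * Y⁻¹ = Y⁻¹ * ((Y * X) * Y⁻¹) := by
        rw [← Matrix.mul_assoc, ← Matrix.mul_assoc, Matrix.nonsing_inv_mul _ hY, Matrix.one_mul]
    _ = Y⁻¹ * ((X * Y) * Y⁻¹) := h2
    _ = Y⁻¹ * X := by
        rw [Matrix.mul_assoc, Matrix.mul_nonsing_inv _ hY, Matrix.mul_one]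

lemma fromBlocks_sub' {l m n o : Type*} (A : Matrix n l ℝ) (B : Matrix n m ℝ)
    (C : Matrix o l ℝ) (D : Matrix o m ℝ) (A' : Matrix n l ℝ) (B' : Matrix n m ℝ)
    (C' : Matrix o l ℝ) (D' : Matrix o m ℝ) :
    Matrix.fromBlocks A B C D - Matrix.fromBlocks A' B' C' D' =
      Matrix.fromBlocks (A - A') (B - B') (C - C') (D - D') := by
  rw [sub_eq_add_neg, Matrix.fromBlocks_neg, Matrix.fromBlocks_add]
  simp [sub_eq_add_neg]

end Helpers

section Scalars

variable {θ r dt : ℝ}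

lemma lem_D (hθ1 : 1/2 ≤ θ) (hr : 0 < r) (hdt : 0 < dt) : 0 < 1 + θ * r * dt := by
  nlinarith [mul_pos (mul_pos (show (0:ℝ) < θ by linarith) hr) hdt]

lemma lem_absx (hθ1 : 1/2 ≤ θ) (hθ2 : θ ≤ 1) (hr : 0 < r) (hdt : 0 < dt) :
    |(1 - (1 - θ) * r * dt) / (1 + θ * r * dt)| < 1 := by
  have hD := lem_D hθ1 hr hdt
  rw [abs_lt]
  constructor
  · rw [neg_lt, ← neg_div, div_lt_one hD]
    nlinarith [mul_nonneg (mul_nonneg (by linarith : (0:ℝ) ≤ 2*θ - 1) hr.le) hdt.le]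
  · rw [div_lt_one hD]
    nlinarith [mul_pos hr hdt]

lemma lem_key (hθ1 : 1/2 ≤ θ) (hθ2 : θ ≤ 1) (hr : 0 < r) (hdt : 0 < dt) :
    1 / (1 + θ * r * dt) * |1 - (1 - (1 - θ) * r * dt) / (1 + θ * r * dt)|
      ≤ 1 - |(1 - (1 - θ) * r * dt) / (1 + θ * r * dt)| := by
  have hD := lem_D hθ1 hr hdt
  set x := (1 - (1 - θ) * r * dt) / (1 + θ * r * dt) with hx
  have hx1 : x < 1 := by
    rw [hx, div_lt_one hD]; nlinarith [mul_pos hr hdt]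
  rw [abs_of_pos (by linarith : 0 < 1 - x)]
  rcases abs_cases x with ⟨h1, h2⟩ | ⟨h1, h2⟩ <;> rw [h1]
  · refine mul_le_of_le_one_left (by linarith) ?_
    rw [div_le_one hD]
    nlinarith [mul_pos (mul_pos (show (0:ℝ) < θ by linarith) hr) hdt]
  · rw [sub_neg_eq_add]
    have e1 : 1 - x = r * dt / (1 + θ * r * dt) := by
      rw [hx]; field_simp; ring
    have e2 : 1 + x = (2 + (2*θ - 1) * (r * dt)) / (1 + θ * r * dt) := by
      rw [hx]; field_simp; ring
    rw [e1, e2, div_mul_div_comm, one_mul, div_le_div_iff₀ (by positivity) hD]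
    nlinarith [mul_pos hr hdt, mul_nonneg (mul_nonneg (by linarith : (0:ℝ) ≤ 2*θ - 1) hr.le) hdt.le,
      mul_pos (mul_pos (show (0:ℝ) < θ by linarith) hr) hdt,
      mul_nonneg (mul_nonneg (mul_nonneg (by linarith : (0:ℝ) ≤ 2*θ - 1) (by linarith : (0:ℝ) ≤ θ)) (mul_nonneg hr.le hdt.le)) (mul_nonneg hr.le hdt.le)]

lemma lem_geom {x : ℝ} (hx : |x| < 1) (J : ℕ) :
    ∑ j ∈ Finset.range J, |x| ^ j ≤ 1 / (1 - |x|) := by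
  rw [le_div_iff₀ (by linarith)]
  have h1 := geom_sum_mul (|x|) J
  have h2 : (0:ℝ) ≤ |x| ^ J := pow_nonneg (abs_nonneg x) J
  nlinarith [h1]

end Scalars

open Matrix Finset in
/-- Assume condition (2.2) and the stability assumption (6.3) hold.  Then for
`Δt = T/N` and `1 ≤ n ≤ N`:
`x^n + (1 − x^n)·2S/h ≤ ‖φ(Δt M)^n‖_∞ ≤ K + 4(K+1)S/h`, where `x = φ(−rΔt)`. -/
theorem statement16 (m : ℕ) (r spen S T : ℝ) (hr : 0 < r) (hT : 0 < T)
    (hspen : 0 < spen) (hsS : spen < S)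
    (θ : ℝ) (hθ : θ ∈ Set.Icc (1/2 : ℝ) 1)
    (α β γ : Fin (m + 1) → ℝ) (hconv : m = 0 → β 0 = 0)
    (A : Matrix (Fin (m + 1)) (Fin (m + 1)) ℝ) (hA : A = tridiag α β γ)
    (B : Matrix (Fin (m + 1)) (Fin 2) ℝ) (hB : B = Bmat (γ (Fin.last m)))
    (C : Matrix (Fin 2) (Fin 2) ℝ) (hC : C = Cmat r spen S (S - spen))
    (M : Matrix (Fin (m + 1) ⊕ Fin 2) (Fin (m + 1) ⊕ Fin 2) ℝ)
    (hM : M = Matrix.fromBlocks A B 0 C)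
    (hinv : IsUnit (r • (1 : Matrix (Fin (m + 1)) (Fin (m + 1)) ℝ) + A).det)
    (hmu : logMaxNorm (r • (1 : Matrix (Fin (m + 1)) (Fin (m + 1)) ℝ) + A) ≤ 0)
    (hrow : r + α (Fin.last m) + |β (Fin.last m)| + |γ (Fin.last m)| ≤ 0)
    (K : ℝ)
    (hK : ∀ N' : ℕ, 1 ≤ N' → ∀ n : ℕ, n ≤ N' →
      matMaxNorm ((phiM θ (T / N') A) ^ n) ≤ K) :
    ∀ N : ℕ, 1 ≤ N → ∀ n : ℕ, 1 ≤ n → n ≤ N →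
      ((1 - (1 - θ) * r * (T / N)) / (1 + θ * r * (T / N))) ^ n +
          (1 - ((1 - (1 - θ) * r * (T / N)) / (1 + θ * r * (T / N))) ^ n) *
            (2 * S / (S - spen)) ≤
        matMaxNorm ((phiM θ (T / N) M) ^ n) ∧
      matMaxNorm ((phiM θ (T / N) M) ^ n) ≤ K + 4 * (K + 1) * S / (S - spen) := by
  obtain ⟨hθ1, hθ2⟩ := hθ
  subst hM
  intro N hN n hn1 hnN
  have hNpos : (0:ℝ) < (N:ℝ) := by exact_mod_cast Nat.lt_of_lt_of_le Nat.zero_lt_one hN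
  set dt := T / (N:ℝ) with hdtdef
  have hdt : 0 < dt := div_pos hT hNpos
  have hS : 0 < S := lt_trans hspen hsS
  have hh : (0:ℝ) < S - spen := by linarith
  have hD : 0 < 1 + θ * r * dt := lem_D hθ1 hr hdt
  set x := (1 - (1 - θ) * r * dt) / (1 + θ * r * dt) with hxdef
  have habsx : |x| < 1 := lem_absx hθ1 hθ2 hr hdt
  have hkey : 1 / (1 + θ * r * dt) * |1 - x| ≤ 1 - |x| := lem_key hθ1 hθ2 hr hdt
  have hθdt : 0 < θ * dt := mul_pos (by linarith) hdt
  have hK1 : 1 ≤ K := by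
    have h0 := hK 1 le_rfl 0 (Nat.zero_le 1)
    rwa [pow_zero, matMaxNorm_one] at h0
  -- per-row consequences of the log-norm assumption
  have hmurow : ∀ i, r + A i i + ∑ j ∈ Finset.univ.erase i, |A i j| ≤ 0 := by
    intro i
    have hb : (r • (1 : Matrix (Fin (m+1)) (Fin (m+1)) ℝ) + A) i i +
        ∑ j ∈ Finset.univ.erase i, |(r • (1 : Matrix (Fin (m+1)) (Fin (m+1)) ℝ) + A) i j| ≤
        logMaxNorm (r • (1 : Matrix (Fin (m+1)) (Fin (m+1)) ℝ) + A) := by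
      exact le_ciSup (Set.Finite.bddAbove (Set.finite_range
        (fun i => (r • (1 : Matrix (Fin (m+1)) (Fin (m+1)) ℝ) + A) i i +
          ∑ j ∈ Finset.univ.erase i, |(r • (1 : Matrix (Fin (m+1)) (Fin (m+1)) ℝ) + A) i j|))) i
    have h1 : (r • (1 : Matrix (Fin (m+1)) (Fin (m+1)) ℝ) + A) i i = r + A i i := by
      simp [Matrix.add_apply, Matrix.smul_apply, Matrix.one_apply_eq]
    have h2 : ∑ j ∈ Finset.univ.erase i, |(r • (1 : Matrix (Fin (m+1)) (Fin (m+1)) ℝ) + A) i j|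
        = ∑ j ∈ Finset.univ.erase i, |A i j| := by
      refine Finset.sum_congr rfl fun j hj => ?_
      have h0 : (1 : Matrix (Fin (m+1)) (Fin (m+1)) ℝ) i j = 0 :=
        Matrix.one_apply_ne' (Finset.ne_of_mem_erase hj)
      simp [Matrix.add_apply, Matrix.smul_apply, h0]
    rw [h1, h2] at hb
    exact le_trans hb hmu
  have hDnn : ∀ i, 0 ≤ ∑ j ∈ Finset.univ.erase i, |A i j| :=
    fun i => Finset.sum_nonneg fun j _ => abs_nonneg _
  have hAdet : IsUnit A.det := by
    refine isUnit_iff_ne_zero.2 (det_ne_zero_of_dominant A fun i => ?_)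
    have h1 := hmurow i; have h2 := hDnn i
    nlinarith [neg_le_abs (A i i)]
  set A' := 1 - (θ * dt) • A with hA'def
  set C' := 1 - (θ * dt) • C with hC'def
  have hA'det : IsUnit A'.det := by
    refine isUnit_iff_ne_zero.2 (det_ne_zero_of_dominant A' fun i => ?_)
    have h1 := hmurow i; have h2 := hDnn i
    have hoff : ∑ j ∈ Finset.univ.erase i, |A' i j|
        = (θ*dt) * ∑ j ∈ Finset.univ.erase i, |A i j| := by
      rw [Finset.mul_sum]
      refine Finset.sum_congr rfl fun j hj => ?_
      have h0 : (1 : Matrix (Fin (m+1)) (Fin (m+1)) ℝ) i j = 0 :=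
        Matrix.one_apply_ne' (Finset.ne_of_mem_erase hj)
      rw [hA'def]
      simp [Matrix.sub_apply, Matrix.smul_apply, h0, abs_mul, abs_of_pos hθdt]
    have hdiag : A' i i = 1 - (θ*dt) * A i i := by
      rw [hA'def]
      simp [Matrix.sub_apply, Matrix.smul_apply, Matrix.one_apply_eq]
    rw [hoff]
    have h3 : (θ*dt) * (∑ j ∈ Finset.univ.erase i, |A i j|) < A' i i := by
      rw [hdiag]
      nlinarith [mul_le_mul_of_nonneg_left
        (show A i i + (∑ j ∈ Finset.univ.erase i, |A i j|) ≤ -r by linarith) hθdt.le]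
    exact lt_of_lt_of_le h3 (le_abs_self _)
  -- C algebra
  have hCC : C * C = (-r) • C := by
    rw [hC]
    ext i j
    rw [Matrix.mul_apply, Fin.sum_univ_two]
    fin_cases j <;>
      simp [Cmat, Matrix.smul_apply] <;> field_simp <;> ring
  have hCmul : ∀ a b : ℝ, ((1 : Matrix (Fin 2) (Fin 2) ℝ) + a • C) * (1 + b • C)
      = 1 + (a + b - r*(a*b)) • C := by
    intro a b
    have hexp : ((1 : Matrix (Fin 2) (Fin 2) ℝ) + a • C) * (1 + b • C)
        = 1 + a • C + b • C + (a*b) • (C*C) := by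
      rw [mul_add, mul_one, add_mul, one_mul, Matrix.smul_mul, Matrix.mul_smul, smul_smul]
      abel
    rw [hexp, hCC, smul_smul, add_assoc, add_assoc, ← add_smul, ← add_smul]
    congr 2
    ring
  have hC'eq : C' * ((1 : Matrix (Fin 2) (Fin 2) ℝ) + ((θ*dt)/(1+θ*r*dt)) • C) = 1 := by
    have hC'alt : C' = (1 : Matrix (Fin 2) (Fin 2) ℝ) + (-(θ*dt)) • C := by
      rw [hC'def, sub_eq_add_neg, neg_smul]
    rw [hC'alt, hCmul]
    have hz : -(θ*dt) + (θ*dt)/(1+θ*r*dt) - r*((-(θ*dt))*((θ*dt)/(1+θ*r*dt))) = 0 := by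
      field_simp
      ring
    rw [hz, zero_smul, add_zero]
  have hC'det : IsUnit C'.det := Matrix.isUnit_det_of_right_inverse hC'eq
  have hC'inv : C'⁻¹ = (1 : Matrix (Fin 2) (Fin 2) ℝ) + ((θ*dt)/(1+θ*r*dt)) • C :=
    Matrix.inv_eq_right_inv hC'eq
  set P := phiM θ dt A with hPdef
  set Q := phiM θ dt C with hQdef
  have hPunfold : P = A'⁻¹ * (1 + ((1-θ)*dt) • A) := by
    rw [hPdef, hA'def]; rfl
  have hQunfold : Q = C'⁻¹ * (1 + ((1-θ)*dt) • C) := by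
    rw [hQdef, hC'def]; rfl
  have hPnorm : ∀ k : ℕ, k ≤ N → matMaxNorm (P^k) ≤ K := by
    intro k hk
    have h0 := hK N hN k hk
    rw [← hdtdef, ← hPdef] at h0
    exact h0
  have hQ1 : Q = (1 : Matrix (Fin 2) (Fin 2) ℝ) + ((1-x)/r) • C := by
    rw [hQunfold, hC'inv, hCmul]
    congr 2
    rw [hxdef]
    field_simp
    ring
  have hQpow : ∀ k : ℕ, Q^k = (1 : Matrix (Fin 2) (Fin 2) ℝ) + ((1-x^k)/r) • C := by
    intro k
    induction k with
    | zero => simp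
    | succ k ih =>
      rw [pow_succ, ih, hQ1, hCmul]
      congr 2
      field_simp
      ring
  -- commutation facts
  have hAA' : A * A' = A' * A := by
    rw [hA'def]
    simp only [Matrix.mul_sub, Matrix.sub_mul, Matrix.mul_one, Matrix.one_mul,
      Matrix.mul_smul, Matrix.smul_mul]
  have hAN1 : A * (1 + ((1-θ)*dt) • A) = (1 + ((1-θ)*dt) • A) * A := by
    simp only [Matrix.mul_add, Matrix.add_mul, Matrix.mul_one, Matrix.one_mul,
      Matrix.mul_smul, Matrix.smul_mul]
  have hAP : A * P = P * A := by
    rw [hPunfold]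
    calc A * (A'⁻¹ * (1 + ((1-θ)*dt) • A)) = (A * A'⁻¹) * (1 + ((1-θ)*dt) • A) :=
          (Matrix.mul_assoc _ _ _).symm
      _ = (A'⁻¹ * A) * (1 + ((1-θ)*dt) • A) := by rw [matrix_inv_comm hA'det hAA']
      _ = A'⁻¹ * (A * (1 + ((1-θ)*dt) • A)) := Matrix.mul_assoc _ _ _
      _ = A'⁻¹ * ((1 + ((1-θ)*dt) • A) * A) := by rw [hAN1]
      _ = (A'⁻¹ * (1 + ((1-θ)*dt) • A)) * A := (Matrix.mul_assoc _ _ _).symm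
  have hPAinv : Commute P A⁻¹ := matrix_inv_comm hAdet hAP.symm
  have hPkAinv : ∀ k : ℕ, P^k * A⁻¹ = A⁻¹ * P^k := fun k => (hPAinv.pow_left k).eq
  have hsubN : (1 + ((1-θ)*dt) • A) - A' = dt • A := by
    rw [hA'def]
    module
  have hinvP1 : A'⁻¹ * (dt • A) = P - 1 := by
    rw [← hsubN, Matrix.mul_sub, Matrix.nonsing_inv_mul _ hA'det, ← hPunfold]
  have hdtA' : dt • A'⁻¹ = A⁻¹ * (P - 1) := by
    calc dt • A'⁻¹ = dt • (A⁻¹ * (A * A'⁻¹)) := by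
          rw [← Matrix.mul_assoc, Matrix.nonsing_inv_mul _ hAdet, Matrix.one_mul]
      _ = dt • (A⁻¹ * (A'⁻¹ * A)) := by rw [matrix_inv_comm hA'det hAA']
      _ = A⁻¹ * (A'⁻¹ * (dt • A)) := by rw [Matrix.mul_smul, Matrix.mul_smul]
      _ = A⁻¹ * (P - 1) := by rw [hinvP1]
  -- the special vector
  set gv : Fin (m+1) → ℝ := (fun i => if i = Fin.last m then γ (Fin.last m) else 0) with hgv
  set vv : Fin (m+1) → ℝ := A⁻¹.mulVec gv with hvv
  have hAv : A.mulVec vv = gv := by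
    rw [hvv, Matrix.mulVec_mulVec, Matrix.mul_nonsing_inv _ hAdet, Matrix.one_mulVec]
  have hdiagA : A (Fin.last m) (Fin.last m) = α (Fin.last m) := by
    rw [hA]
    simp [tridiag]
  have hsumβ : ∑ j ∈ Finset.univ.erase (Fin.last m), |A (Fin.last m) j| ≤ |β (Fin.last m)| := by
    rcases Nat.eq_zero_or_pos m with hm | hm
    · subst hm
      rw [Finset.sum_eq_zero]
      · exact abs_nonneg _
      · intro j hj
        have hj1 : (j:ℕ) = 0 := by omega
        exact absurd (Fin.ext (by simp [hj1])) (Finset.mem_erase.1 hj).1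
    · obtain ⟨k, rfl⟩ : ∃ k, m = k + 1 := ⟨m-1, by omega⟩
      have hje : ∀ j ∈ Finset.univ.erase (Fin.last (k+1)),
          |A (Fin.last (k+1)) j| ≤ if j = (⟨k, by omega⟩ : Fin (k+2)) then |β (Fin.last (k+1))| else 0 := by
        intro j hj
        have hjne : j ≠ Fin.last (k+1) := (Finset.mem_erase.1 hj).1
        have hjv : (j : ℕ) ≠ k + 1 := fun hc => hjne (Fin.ext (by simp [hc]))
        by_cases hjm : j = (⟨k, by omega⟩ : Fin (k+2))
        · have hentry : A (Fin.last (k+1)) j = β (Fin.last (k+1)) := by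
            rw [hA]
            show (if ((Fin.last (k+1) : ℕ) = (j:ℕ)) then α (Fin.last (k+1))
              else if ((Fin.last (k+1) : ℕ) = (j : ℕ) + 1) then β (Fin.last (k+1))
              else if ((j:ℕ) = (Fin.last (k+1) : ℕ) + 1) then γ (Fin.last (k+1)) else 0) = _
            have hjk : (j : ℕ) = k := by rw [hjm]
            rw [Fin.val_last, if_neg (by omega), if_pos (by omega)]
          rw [if_pos hjm, hentry]
        · have hjk2 : (j : ℕ) ≠ k := fun hc => hjm (Fin.ext (by simp [hc]))
          have hentry : A (Fin.last (k+1)) j = 0 := by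
            rw [hA]
            show (if ((Fin.last (k+1) : ℕ) = (j:ℕ)) then α (Fin.last (k+1))
              else if ((Fin.last (k+1) : ℕ) = (j : ℕ) + 1) then β (Fin.last (k+1))
              else if ((j:ℕ) = (Fin.last (k+1) : ℕ) + 1) then γ (Fin.last (k+1)) else 0) = 0
            have hjlt : (j : ℕ) < k + 2 := j.isLt
            rw [Fin.val_last, if_neg (by omega), if_neg (by omega), if_neg (by omega)]
          rw [if_neg hjm, hentry, abs_zero]
      refine le_trans (Finset.sum_le_sum hje) ?_
      rw [Finset.sum_ite_eq' (Finset.univ.erase (Fin.last (k+1))) (⟨k, by omega⟩ : Fin (k+2))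
        (fun _ => |β (Fin.last (k+1))|)]
      split_ifs
      · exact le_rfl
      · exact abs_nonneg _
  have hvb : ∀ j, |vv j| ≤ 1 := by
    obtain ⟨i₀, -, hmax⟩ := Finset.exists_max_image Finset.univ (fun i => |vv i|)
      ⟨Fin.last m, Finset.mem_univ _⟩
    suffices hS1 : |vv i₀| ≤ 1 by
      intro j
      exact le_trans (hmax j (Finset.mem_univ j)) hS1
    have hrowi : A i₀ i₀ * vv i₀ = gv i₀ - ∑ jj ∈ Finset.univ.erase i₀, A i₀ jj * vv jj := by
      have h2 : A i₀ i₀ * vv i₀ + ∑ jj ∈ Finset.univ.erase i₀, A i₀ jj * vv jj = ∑ jj, A i₀ jj * vv jj :=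
        Finset.add_sum_erase Finset.univ (fun jj => A i₀ jj * vv jj) (Finset.mem_univ i₀)
      have h3 : ∑ jj, A i₀ jj * vv jj = gv i₀ := by
        have := congrFun hAv i₀
        simpa [Matrix.mulVec, dotProduct] using this
      rw [h3] at h2
      linarith
    have habs : |A i₀ i₀| * |vv i₀| ≤ |gv i₀| +
        (∑ jj ∈ Finset.univ.erase i₀, |A i₀ jj|) * |vv i₀| := by
      rw [← abs_mul, hrowi]
      refine le_trans (abs_sub _ _) ?_
      refine add_le_add (le_refl _) ?_
      rw [Finset.sum_mul]
      refine le_trans (Finset.abs_sum_le_sum_abs _ _) (Finset.sum_le_sum fun jj _ => ?_)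
      rw [abs_mul]
      exact mul_le_mul_of_nonneg_left (hmax jj (Finset.mem_univ jj)) (abs_nonneg _)
    by_cases hi₀ : i₀ = Fin.last m
    · rw [hi₀] at habs ⊢
      have hg : gv (Fin.last m) = γ (Fin.last m) := by simp [hgv]
      have h1 : (∑ jj ∈ Finset.univ.erase (Fin.last m), |A (Fin.last m) jj|) * |vv (Fin.last m)| ≤
          |β (Fin.last m)| * |vv (Fin.last m)| :=
        mul_le_mul_of_nonneg_right hsumβ (abs_nonneg _)
      have h2 : r + |β (Fin.last m)| + |γ (Fin.last m)| ≤ -α (Fin.last m) := by linarith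
      have h3 : -α (Fin.last m) ≤ |A (Fin.last m) (Fin.last m)| := by
        rw [hdiagA]; exact neg_le_abs _
      have h4 : (r + |β (Fin.last m)| + |γ (Fin.last m)|) * |vv (Fin.last m)|
          ≤ |A (Fin.last m) (Fin.last m)| * |vv (Fin.last m)| :=
        mul_le_mul_of_nonneg_right (le_trans h2 h3) (abs_nonneg _)
      rw [hg] at habs
      by_contra hcon
      push_neg at hcon
      nlinarith [abs_nonneg (γ (Fin.last m)), abs_nonneg (β (Fin.last m)),
        mul_pos (show (0:ℝ) < r + |γ (Fin.last m)| by positivity)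
          (show (0:ℝ) < |vv (Fin.last m)| - 1 by linarith)]
    · have hg : gv i₀ = 0 := by simp [hgv, hi₀]
      have h1 := hmurow i₀
      have h3 : r + (∑ jj ∈ Finset.univ.erase i₀, |A i₀ jj|) ≤ |A i₀ i₀| := by
        nlinarith [neg_le_abs (A i₀ i₀)]
      have h4 : (r + ∑ jj ∈ Finset.univ.erase i₀, |A i₀ jj|) * |vv i₀| ≤ |A i₀ i₀| * |vv i₀| :=
        mul_le_mul_of_nonneg_right h3 (abs_nonneg _)
      rw [hg, abs_zero, zero_add] at habs
      nlinarith [abs_nonneg (vv i₀)]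
  -- block structure
  have hM1 : (1 : Matrix (Fin (m+1) ⊕ Fin 2) (Fin (m+1) ⊕ Fin 2) ℝ)
      - (θ*dt) • (Matrix.fromBlocks A B 0 C)
      = Matrix.fromBlocks A' (-((θ*dt) • B)) 0 C' := by
    rw [Matrix.fromBlocks_smul, ← Matrix.fromBlocks_one, fromBlocks_sub', hA'def, hC'def]
    simp [zero_sub]
  have hMeq : (Matrix.fromBlocks A' (-((θ*dt) • B)) 0 C') *
      (Matrix.fromBlocks A'⁻¹ (A'⁻¹ * ((θ*dt) • B) * C'⁻¹) 0 C'⁻¹) = 1 := by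
    rw [Matrix.fromBlocks_multiply, ← Matrix.fromBlocks_one]
    refine Matrix.fromBlocks_inj.2 ⟨?_, ?_, ?_, ?_⟩
    · simp [Matrix.mul_nonsing_inv _ hA'det]
    · rw [← Matrix.mul_assoc, ← Matrix.mul_assoc, Matrix.mul_nonsing_inv _ hA'det,
        Matrix.one_mul, Matrix.neg_mul]
      simp
    · simp
    · simp [Matrix.mul_nonsing_inv _ hC'det]
  have hMinv : ((1 : Matrix (Fin (m+1) ⊕ Fin 2) (Fin (m+1) ⊕ Fin 2) ℝ)
      - (θ*dt) • (Matrix.fromBlocks A B 0 C))⁻¹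
      = Matrix.fromBlocks A'⁻¹ (A'⁻¹ * ((θ*dt) • B) * C'⁻¹) 0 C'⁻¹ := by
    rw [hM1]
    exact Matrix.inv_eq_right_inv hMeq
  have hN1 : (1 : Matrix (Fin (m+1) ⊕ Fin 2) (Fin (m+1) ⊕ Fin 2) ℝ)
      + ((1-θ)*dt) • (Matrix.fromBlocks A B 0 C)
      = Matrix.fromBlocks (1 + ((1-θ)*dt) • A) (((1-θ)*dt) • B) 0 (1 + ((1-θ)*dt) • C) := by
    rw [Matrix.fromBlocks_smul, ← Matrix.fromBlocks_one, Matrix.fromBlocks_add]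
    simp
  set F := A'⁻¹ * B * (dt • C'⁻¹) with hFdef
  have hs1 : (1-θ)*dt + θ*dt = dt := by ring
  have hs2 : θ*dt*((1-x)/r) = dt*((θ*dt)/(1+θ*r*dt)) := by
    rw [hxdef]
    field_simp
    ring
  have hinner : ((1-θ)*dt) • (1 : Matrix (Fin 2) (Fin 2) ℝ)
      + (θ*dt) • (C'⁻¹ * (1 + ((1-θ)*dt) • C)) = dt • C'⁻¹ := by
    rw [← hQunfold, hQ1, hC'inv]
    have hR : dt • ((1 : Matrix (Fin 2) (Fin 2) ℝ) + ((θ*dt)/(1+θ*r*dt)) • C)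
        = dt • (1 : Matrix (Fin 2) (Fin 2) ℝ) + (dt*((θ*dt)/(1+θ*r*dt))) • C := by
      rw [smul_add, smul_smul]
    rw [hR, smul_add, smul_smul, ← add_assoc, ← add_smul, hs1, hs2]
  have hPhi : phiM θ dt (Matrix.fromBlocks A B 0 C) = Matrix.fromBlocks P F 0 Q := by
    show ((1 : Matrix (Fin (m+1) ⊕ Fin 2) (Fin (m+1) ⊕ Fin 2) ℝ)
        - (θ*dt) • (Matrix.fromBlocks A B 0 C))⁻¹
      * (1 + ((1-θ)*dt) • (Matrix.fromBlocks A B 0 C)) = _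
    rw [hMinv, hN1, Matrix.fromBlocks_multiply]
    refine Matrix.fromBlocks_inj.2 ⟨?_, ?_, ?_, ?_⟩
    · rw [Matrix.mul_zero, add_zero, ← hPunfold]
    · calc A'⁻¹ * (((1-θ)*dt) • B) + (A'⁻¹ * ((θ*dt) • B) * C'⁻¹) * (1 + ((1-θ)*dt) • C)
          = A'⁻¹ * (B * (((1-θ)*dt) • (1 : Matrix (Fin 2) (Fin 2) ℝ)
              + (θ*dt) • (C'⁻¹ * (1 + ((1-θ)*dt) • C)))) := by
            simp only [Matrix.mul_add, Matrix.mul_smul, Matrix.smul_mul, Matrix.mul_one,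
              Matrix.mul_assoc]
            module
        _ = A'⁻¹ * (B * (dt • C'⁻¹)) := by rw [hinner]
        _ = F := by rw [hFdef, Matrix.mul_assoc]
    · simp
    · rw [Matrix.zero_mul, zero_add, ← hQunfold]
  have hPow : ∀ k : ℕ, (phiM θ dt (Matrix.fromBlocks A B 0 C))^k
      = Matrix.fromBlocks (P^k) (∑ j ∈ Finset.range k, P^j * F * Q^(k-1-j)) 0 (Q^k) := by
    intro k
    induction k with
    | zero => simp
    | succ k ih =>
      rw [pow_succ, ih, hPhi, Matrix.fromBlocks_multiply]
      refine Matrix.fromBlocks_inj.2 ⟨?_, ?_, ?_, ?_⟩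
      · rw [Matrix.mul_zero, add_zero, ← pow_succ]
      · rw [Finset.sum_range_succ, Nat.add_sub_cancel, Nat.sub_self, pow_zero, Matrix.mul_one,
          Matrix.sum_mul]
        have hterm : ∀ j ∈ Finset.range k, P^j*F*Q^(k-1-j) * Q = P^j*F*Q^(k-j) := by
          intro j hj
          have hjk : j < k := Finset.mem_range.1 hj
          have he : k - j = (k - 1 - j) + 1 := by omega
          simp [he, pow_succ, Matrix.mul_assoc]
        rw [Finset.sum_congr rfl hterm]
        exact add_comm _ _
      · simp
      · rw [Matrix.zero_mul, zero_add, ← pow_succ]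
  -- entrywise description of the off-diagonal block
  set μf : ℕ → ℝ := (fun j => 1 - (1/(1+θ*r*dt)) * x^j) with hμ
  set wf : ℕ → Fin 2 → ℝ := (fun j l => if l = 0 then 1 - μf j * (S/(S-spen))
    else μf j * (spen/(S-spen))) with hw
  set uf : ℕ → Fin (m+1) → ℝ := (fun k => (P^(k+1) - P^k).mulVec vv) with hu
  have hW : ∀ j : ℕ, C'⁻¹ * Q^j = (1 : Matrix (Fin 2) (Fin 2) ℝ) + ((μf j)/r) • C := by
    intro j
    rw [hC'inv, hQpow j, hCmul]
    congr 2
    simp only [hμ]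
    field_simp
    try ring
  have hent0 : ∀ (c : ℝ) (l : Fin 2), ((1 : Matrix (Fin 2) (Fin 2) ℝ) + (c/r) • C) l 0
      = (if l = 0 then (1:ℝ) else 0) - c*(S/(S-spen)) := by
    intro c l
    have hCe : C l 0 = -(r*S)/(S-spen) := by rw [hC]; rfl
    rw [Matrix.add_apply, Matrix.smul_apply, hCe, Matrix.one_apply, smul_eq_mul]
    have he : c / r * (-(r * S) / (S - spen)) = -(c * (S/(S-spen))) := by
      field_simp
    rw [he]
    ring
  have hent1 : ∀ (c : ℝ) (l : Fin 2), ((1 : Matrix (Fin 2) (Fin 2) ℝ) + (c/r) • C) l 1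
      = (if l = 1 then (1:ℝ) else 0) + c*(spen/(S-spen)) := by
    intro c l
    have hCe : C l 1 = r*spen/(S-spen) := by rw [hC]; rfl
    rw [Matrix.add_apply, Matrix.smul_apply, hCe, Matrix.one_apply, smul_eq_mul]
    have he : c / r * (r * spen / (S - spen)) = c * (spen/(S-spen)) := by
      field_simp
    rw [he]
  have hBW : ∀ j : ℕ, B * (C'⁻¹ * Q^j) = Matrix.vecMulVec gv (wf j) := by
    intro j
    rw [hW j, hB]
    ext i l
    rw [Matrix.mul_apply, Fin.sum_univ_two, Matrix.vecMulVec_apply]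
    have hB0 : (Bmat (γ (Fin.last m)) : Matrix (Fin (m+1)) (Fin 2) ℝ) i 0 = gv i := by
      simp [Bmat, hgv]
    have hB1 : (Bmat (γ (Fin.last m)) : Matrix (Fin (m+1)) (Fin 2) ℝ) i 1 = 0 := by
      simp [Bmat]
    rw [hB0, hB1, zero_mul, add_zero]
    congr 1
    by_cases hl : l = 0
    · subst hl
      rw [hent0 (μf j) 0]
      simp [hw]
    · have hl1 : l = 1 := by
        refine Fin.ext ?_
        rw [Fin.val_one]
        have h2 := l.isLt
        have h0 : (l:ℕ) ≠ 0 := fun hc => hl (Fin.ext (by simpa using hc))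
        omega
      subst hl1
      rw [hent1 (μf j) 0]
      simp [hw]
  have hPkF : ∀ k j : ℕ, P^k * F * Q^j = Matrix.vecMulVec (uf k) (wf j) := by
    intro k j
    have h2 : P^k * (dt • A'⁻¹) = A⁻¹ * (P^(k+1) - P^k) := by
      rw [hdtA', ← Matrix.mul_assoc, hPkAinv k, Matrix.mul_assoc, Matrix.mul_sub,
        Matrix.mul_one, ← pow_succ]
    have h1 : P^k * F * Q^j = (A⁻¹ * (P^(k+1) - P^k)) * (B * (C'⁻¹ * Q^j)) := by
      rw [hFdef, ← h2]
      simp only [Matrix.mul_smul, Matrix.smul_mul, Matrix.mul_assoc]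
    rw [h1, hBW j, _root_.mul_vecMulVec]
    congr 1
    have hcomm : A⁻¹ * (P^(k+1) - P^k) = (P^(k+1) - P^k) * A⁻¹ := by
      rw [Matrix.mul_sub, Matrix.sub_mul, hPkAinv (k+1), hPkAinv k]
    rw [hcomm, ← Matrix.mulVec_mulVec]
  have hEapp : ∀ (i : Fin (m+1)) (l : Fin 2),
      (∑ j ∈ Finset.range n, P^j * F * Q^(n-1-j)) i l
        = ∑ k ∈ Finset.range n, (uf k i) * (wf (n-1-k) l) := by
    intro i l
    rw [Matrix.sum_apply]
    refine Finset.sum_congr rfl fun k hk => ?_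
    rw [hPkF k (n-1-k), Matrix.vecMulVec_apply]
  have hGsum : ∀ (jj : ℕ) (i : Fin (m+1)),
      ∑ l ∈ Finset.range jj, uf l i = (P^jj).mulVec vv i - vv i := by
    intro jj i
    have h1 : ∀ l, uf l i = (P^(l+1)).mulVec vv i - (P^l).mulVec vv i := by
      intro l
      simp only [hu, Matrix.sub_mulVec, Pi.sub_apply]
    calc ∑ l ∈ Finset.range jj, uf l i
        = ∑ l ∈ Finset.range jj, ((fun l => (P^l).mulVec vv i) (l+1)
            - (fun l => (P^l).mulVec vv i) l) := Finset.sum_congr rfl (fun l _ => h1 l)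
      _ = (P^jj).mulVec vv i - (P^0).mulVec vv i :=
          Finset.sum_range_sub (fun l => (P^l).mulVec vv i) jj
      _ = (P^jj).mulVec vv i - vv i := by rw [pow_zero, Matrix.one_mulVec]
  have habsPk : ∀ k : ℕ, k ≤ N → ∀ i, |(P^k).mulVec vv i| ≤ K := by
    intro k hk i
    exact le_trans (abs_mulVec_le _ _ hvb i) (hPnorm k hk)
  have habsG : ∀ jj : ℕ, jj ≤ N → ∀ i, |∑ l ∈ Finset.range jj, uf l i| ≤ K + 1 := by
    intro jj hjj i
    rw [hGsum jj i]
    refine le_trans (abs_sub _ _) ?_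
    exact add_le_add (habsPk jj hjj i) (hvb i)
  have hy0 : 0 < 1/(1+θ*r*dt) := by positivity
  have hy1 : 1/(1+θ*r*dt) ≤ 1 := by
    rw [div_le_one hD]
    nlinarith [mul_pos (mul_pos (show (0:ℝ) < θ by linarith) hr) hdt]
  have hqbound : ∀ i, |∑ k ∈ Finset.range n, μf (n-1-k) * uf k i| ≤ 2*(K+1) := by
    intro i
    have habel := Finset.sum_range_by_parts (fun k => μf (n-1-k)) (fun k => uf k i) n
    simp only [smul_eq_mul] at habel
    rw [habel]
    have hb1 : |μf (n-1-(n-1))| ≤ 1 := by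
      rw [Nat.sub_self]
      simp only [hμ, pow_zero, mul_one]
      rw [abs_le]
      constructor <;> linarith
    have hGn : |∑ l ∈ Finset.range n, uf l i| ≤ K + 1 := habsG n hnN i
    have hdsum : ∑ k ∈ Finset.range (n-1), |μf (n-1-(k+1)) - μf (n-1-k)| ≤ 1 := by
      have hterm : ∀ k ∈ Finset.range (n-1), |μf (n-1-(k+1)) - μf (n-1-k)|
          = (1/(1+θ*r*dt)) * |1-x| * |x|^(n-2-k) := by
        intro k hk
        have hk' : k < n - 1 := Finset.mem_range.1 hk
        have e1 : n - 1 - (k+1) = n-2-k := by omega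
        have e2 : n - 1 - k = (n-2-k) + 1 := by omega
        rw [e1, e2]
        simp only [hμ]
        have e3 : (1 - 1/(1+θ*r*dt) * x^(n-2-k)) - (1 - 1/(1+θ*r*dt) * x^((n-2-k)+1))
            = -((1/(1+θ*r*dt)) * ((1-x) * x^(n-2-k))) := by ring
        rw [e3, abs_neg, abs_mul, abs_mul, abs_of_pos hy0, abs_pow,
          mul_assoc (1/(1+θ*r*dt)) (|1-x|) (|x|^(n-2-k))]
      rw [Finset.sum_congr rfl hterm, ← Finset.mul_sum]
      have hre : ∑ k ∈ Finset.range (n-1), |x|^(n-2-k) = ∑ j ∈ Finset.range (n-1), |x|^j := by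
        have h0 := Finset.sum_range_reflect (fun j => |x|^j) (n-1)
        calc ∑ k ∈ Finset.range (n-1), |x|^(n-2-k)
            = ∑ k ∈ Finset.range (n-1), |x|^(n-1-1-k) := rfl
          _ = ∑ j ∈ Finset.range (n-1), |x|^j := h0
      rw [hre]
      calc (1/(1+θ*r*dt)) * |1-x| * (∑ j ∈ Finset.range (n-1), |x|^j)
          ≤ (1/(1+θ*r*dt)) * |1-x| * (1/(1-|x|)) := by
            refine mul_le_mul_of_nonneg_left (lem_geom habsx (n-1))
              (mul_nonneg (le_of_lt hy0) (abs_nonneg _))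
        _ ≤ (1-|x|) * (1/(1-|x|)) :=
            mul_le_mul_of_nonneg_right hkey
              (le_of_lt (one_div_pos.2 (by linarith : (0:ℝ) < 1 - |x|)))
        _ = 1 := by
            rw [mul_one_div, div_self (by linarith : (1:ℝ)-|x| ≠ 0)]
    calc |μf (n-1-(n-1)) * (∑ l ∈ Finset.range n, uf l i)
        - ∑ k ∈ Finset.range (n-1), (μf (n-1-(k+1)) - μf (n-1-k)) * (∑ l ∈ Finset.range (k+1), uf l i)|
        ≤ |μf (n-1-(n-1))| * |∑ l ∈ Finset.range n, uf l i|
          + ∑ k ∈ Finset.range (n-1), |μf (n-1-(k+1)) - μf (n-1-k)| * |∑ l ∈ Finset.range (k+1), uf l i| := by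
          refine le_trans (abs_sub _ _) ?_
          rw [abs_mul]
          refine add_le_add (le_refl _) ?_
          refine le_trans (Finset.abs_sum_le_sum_abs _ _) ?_
          refine Finset.sum_le_sum fun k hk => ?_
          rw [abs_mul]
      _ ≤ 1 * (K+1) + ∑ k ∈ Finset.range (n-1), |μf (n-1-(k+1)) - μf (n-1-k)| * (K+1) := by
          refine add_le_add (mul_le_mul hb1 hGn (abs_nonneg _) zero_le_one) ?_
          refine Finset.sum_le_sum fun k hk => ?_
          refine mul_le_mul_of_nonneg_left ?_ (abs_nonneg _)
          refine habsG (k+1) ?_ i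
          have := Finset.mem_range.1 hk
          omega
      _ = (K+1) + (∑ k ∈ Finset.range (n-1), |μf (n-1-(k+1)) - μf (n-1-k)|) * (K+1) := by
          rw [one_mul, Finset.sum_mul]
      _ ≤ (K+1) + 1 * (K+1) := by
          refine add_le_add (le_refl _) (mul_le_mul_of_nonneg_right hdsum (by linarith))
      _ = 2*(K+1) := by ring
  have hE0 : ∀ i, (∑ j ∈ Finset.range n, P^j * F * Q^(n-1-j)) i 0
      = ((P^n).mulVec vv i - vv i)
        - (S/(S-spen)) * (∑ k ∈ Finset.range n, μf (n-1-k) * uf k i) := by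
    intro i
    rw [hEapp i 0]
    have hterm : ∀ k ∈ Finset.range n, uf k i * wf (n-1-k) 0
        = uf k i - (S/(S-spen)) * (μf (n-1-k) * uf k i) := by
      intro k _
      simp only [hw, if_pos rfl]
      ring
    rw [Finset.sum_congr rfl hterm, Finset.sum_sub_distrib, ← Finset.mul_sum, hGsum n i]
  have hE1 : ∀ i, (∑ j ∈ Finset.range n, P^j * F * Q^(n-1-j)) i 1
      = (spen/(S-spen)) * (∑ k ∈ Finset.range n, μf (n-1-k) * uf k i) := by
    intro i
    rw [hEapp i 1]
    have hterm : ∀ k ∈ Finset.range n, uf k i * wf (n-1-k) 1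
        = (spen/(S-spen)) * (μf (n-1-k) * uf k i) := by
      intro k _
      simp only [hw, if_neg (by decide : ¬ (1 : Fin 2) = 0)]
      ring
    rw [Finset.sum_congr rfl hterm, ← Finset.mul_sum]
  -- Q^n entries
  have hxn : |x^n| ≤ 1 := by
    rw [abs_pow]
    exact pow_le_one₀ (abs_nonneg x) habsx.le
  have hxn' := abs_le.1 hxn
  have ha1 : (1:ℝ) ≤ S/(S-spen) := (one_le_div hh).2 (by linarith)
  have hb0 : (0:ℝ) ≤ spen/(S-spen) := by positivity
  have hba : spen/(S-spen) ≤ S/(S-spen) := by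
    rw [div_le_div_iff₀ hh hh]
    nlinarith
  have hea0 : 0 ≤ (1-x^n)*(S/(S-spen)) := mul_nonneg (by linarith [hxn'.2]) (by linarith)
  have heb0 : 0 ≤ (1-x^n)*(spen/(S-spen)) := mul_nonneg (by linarith [hxn'.2]) hb0
  have hea2 : (1-x^n)*(S/(S-spen)) ≤ 2*(S/(S-spen)) :=
    mul_le_mul_of_nonneg_right (by linarith [hxn'.1]) (by linarith)
  have heb2 : (1-x^n)*(spen/(S-spen)) ≤ 2*(spen/(S-spen)) :=
    mul_le_mul_of_nonneg_right (by linarith [hxn'.1]) hb0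
  have h4S : 4*(K+1)*S/(S-spen) = 4*(K+1)*(S/(S-spen)) := by ring
  constructor
  · -- lower bound
    rw [hPow n]
    refine le_trans (le_of_eq ?_) (rowSum_le_matMaxNorm _ (Sum.inr 1))
    rw [Fintype.sum_sum_type]
    simp only [Matrix.fromBlocks_apply₂₁, Matrix.fromBlocks_apply₂₂, Matrix.zero_apply,
      abs_zero, Finset.sum_const_zero, zero_add, Fin.sum_univ_two]
    rw [hQpow n, hent0 (1-x^n) 1, hent1 (1-x^n) 1]
    rw [if_neg (by decide : ¬ (1:Fin 2) = 0), if_pos rfl, zero_sub, abs_neg,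
      abs_of_nonneg hea0, abs_of_nonneg (by linarith : (0:ℝ) ≤ 1 + (1-x^n)*(spen/(S-spen)))]
    field_simp
    ring
  · -- upper bound
    rw [hPow n]
    refine matMaxNorm_le _ ?_
    rintro (i | l)
    · -- top rows
      rw [Fintype.sum_sum_type]
      simp only [Matrix.fromBlocks_apply₁₁, Matrix.fromBlocks_apply₁₂]
      rw [Fin.sum_univ_two]
      have h1 : ∑ j, |(P^n) i j| ≤ K :=
        le_trans (rowSum_le_matMaxNorm (P^n) i) (hPnorm n hnN)
      have h5 : |(P^n).mulVec vv i - vv i| ≤ K + 1 :=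
        le_trans (abs_sub _ _) (add_le_add (habsPk n hnN i) (hvb i))
      have h6 := hqbound i
      have h3 : |(∑ j ∈ Finset.range n, P^j * F * Q^(n-1-j)) i 0|
          ≤ (K+1) + (S/(S-spen)) * (2*(K+1)) := by
        rw [hE0 i]
        refine le_trans (abs_sub _ _) ?_
        refine add_le_add h5 ?_
        rw [abs_mul, abs_of_pos (by positivity : (0:ℝ) < S/(S-spen))]
        exact mul_le_mul_of_nonneg_left h6 (by positivity)
      have h4 : |(∑ j ∈ Finset.range n, P^j * F * Q^(n-1-j)) i 1|
          ≤ (spen/(S-spen)) * (2*(K+1)) := by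
        rw [hE1 i, abs_mul, abs_of_nonneg hb0]
        exact mul_le_mul_of_nonneg_left h6 hb0
      have hscal : (K+1) + ((K+1) + (S/(S-spen))*(2*(K+1))) + (spen/(S-spen))*(2*(K+1))
          ≤ 1 + 4*(K+1)*S/(S-spen) := by
        have he : 4*(K+1)*S/(S-spen) = (S/(S-spen))*(2*(K+1)) + (spen/(S-spen))*(2*(K+1))
            + (2*(K+1)*(S-spen) - 2*(K+1)*spen + 2*(K+1)*spen)/(S-spen) := by
          field_simp
          ring
        have he2 : (2*(K+1)*(S-spen) - 2*(K+1)*spen + 2*(K+1)*spen)/(S-spen) = 2*(K+1) := by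
          rw [show 2*(K+1)*(S-spen) - 2*(K+1)*spen + 2*(K+1)*spen = 2*(K+1)*(S-spen) by ring,
            mul_div_assoc, div_self hh.ne', mul_one]
        rw [he, he2]
        linarith
      linarith
    · -- bottom rows
      rw [Fintype.sum_sum_type]
      simp only [Matrix.fromBlocks_apply₂₁, Matrix.fromBlocks_apply₂₂, Matrix.zero_apply,
        abs_zero, Finset.sum_const_zero, zero_add, Fin.sum_univ_two]
      rw [hQpow n, hent0 (1-x^n) l, hent1 (1-x^n) l]
      have hKa : 2*(S/(S-spen)) + 2*(spen/(S-spen)) ≤ 4*(K+1)*(S/(S-spen)) - (K - 1) := by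
        nlinarith [mul_nonneg (show (0:ℝ) ≤ K - 1 by linarith) (show (0:ℝ) ≤ S/(S-spen) by linarith)]
      by_cases hl : l = 0
      · rw [if_pos hl, if_neg (by rw [hl]; decide)]
        have hab1 : |1 - (1-x^n)*(S/(S-spen))| ≤ 1 + (1-x^n)*(S/(S-spen)) := by
          rw [abs_le]
          constructor <;> linarith
        rw [zero_add, abs_of_nonneg heb0]
        rw [h4S]
        linarith
      · have hl1 : l = 1 := by omega
        rw [if_neg hl, if_pos hl1, zero_sub, abs_neg, abs_of_nonneg hea0,
          abs_of_nonneg (by linarith : (0:ℝ) ≤ 1 + (1-x^n)*(spen/(S-spen)))]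
        rw [h4S]
        linarith
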